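/- Resource bisimilarity ≃ is a congruence: if r ≃ s then (r + w) ≃ (s + w) for every marking w; concretely, the relation R = {(r+w, s+w) | r ≃ s, w ∈ ℕ^P} is a resource bisimulation. -/
import Mathlib


/-- A labeled Petri net: places `P`, transitions `T`, action labels `Act`. -/
structure LPN (P T Act : Type) where
  pre : T → P → ℕ
  post : T → P → ℕ
  lab : T → Act

variable {P T Act : Type}

/-- Firing relation: `M` fires `t` yielding `M'`. -/
def Fires (N : LPN P T Act) (M : P → ℕ) (t : T) (M' : P → ℕ) : Prop :=
  N.pre t ≤ M ∧ M' = fun p => M p - N.pre t p + N.post t p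

/-- `R` satisfies the (ordinary) transfer property w.r.t. `R'`. -/
def Transfer (N : LPN P T Act) (R R' : (P → ℕ) → (P → ℕ) → Prop) : Prop :=
  ∀ M₁ M₂, R M₁ M₂ → ∀ t M₁', Fires N M₁ t M₁' →
    ∃ u M₂', N.lab u = N.lab t ∧ Fires N M₂ u M₂' ∧ R' M₁' M₂'

/-- `R` is a bisimulation. -/
def IsBisim (N : LPN P T Act) (R : (P → ℕ) → (P → ℕ) → Prop) : Prop :=
  Transfer N R R ∧ Transfer N (fun a b => R b a) (fun a b => R b a)

/-- Bisimilarity `∼`. -/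
def Bisim (N : LPN P T Act) (M₁ M₂ : P → ℕ) : Prop :=
  ∃ R, IsBisim N R ∧ R M₁ M₂

/-- A congruence on markings: an equivalence compatible with addition. -/
def IsCongruence (ρ : (P → ℕ) → (P → ℕ) → Prop) : Prop :=
  Equivalence ρ ∧ ∀ r₁ r₂ s, ρ r₁ r₂ → ρ (r₁ + s) (r₂ + s)

/-- Resource similarity `≈`. -/
def ResSim (N : LPN P T Act) (r s : P → ℕ) : Prop :=
  ∀ w, Bisim N (r + w) (s + w)

/-- `R` satisfies the resource transfer property w.r.t. `R'`. -/
def ResTransfer (N : LPN P T Act) (R R' : (P → ℕ) → (P → ℕ) → Prop) : Prop :=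
  ∀ r s, R r s → ∀ t r', Fires N (fun p => r p + (N.pre t p - r p)) t r' →
    ∃ u s', N.lab u = N.lab t ∧
      Fires N (fun p => s p + (N.pre t p - r p)) u s' ∧ R' r' s'

/-- `R` is a resource bisimulation. -/
def IsResBisim (N : LPN P T Act) (R : (P → ℕ) → (P → ℕ) → Prop) : Prop :=
  ResTransfer N R R ∧ ResTransfer N (fun a b => R b a) (fun a b => R b a)

/-- Resource bisimilarity `≃`. -/
def ResBisim (N : LPN P T Act) (r s : P → ℕ) : Prop :=
  ∃ R, IsResBisim N R ∧ R r s

/-- Stratified bisimilarity `∼ᵢ`. -/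
def Strat (N : LPN P T Act) : ℕ → (P → ℕ) → (P → ℕ) → Prop
  | 0, _, _ => True
  | i + 1, M₁, M₂ =>
      (∀ t M₁', Fires N M₁ t M₁' →
        ∃ u M₂', N.lab u = N.lab t ∧ Fires N M₂ u M₂' ∧ Strat N i M₁' M₂') ∧
      (∀ t M₂', Fires N M₂ t M₂' →
        ∃ u M₁', N.lab u = N.lab t ∧ Fires N M₁ u M₁' ∧ Strat N i M₂' M₁')

/-- Stratified resource bisimilarity `≃ᵢ`. -/
def StratRes (N : LPN P T Act) : ℕ → (P → ℕ) → (P → ℕ) → Prop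
  | 0, _, _ => True
  | i + 1, r, s =>
      (∀ t r', Fires N (fun p => r p + (N.pre t p - r p)) t r' →
        ∃ u s', N.lab u = N.lab t ∧
          Fires N (fun p => s p + (N.pre t p - r p)) u s' ∧ StratRes N i r' s') ∧
      (∀ t s', Fires N (fun p => s p + (N.pre t p - s p)) t s' →
        ∃ u r', N.lab u = N.lab t ∧
          Fires N (fun p => r p + (N.pre t p - s p)) u r' ∧ StratRes N i s' r')

/-- The equivalence level: the largest `i` with `r ≃ᵢ s` (`⊤` = ω if all `i`). -/
noncomputable def eqlev (N : LPN P T Act) (r s : P → ℕ) : ℕ∞ :=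
  sSup {n : ℕ∞ | ∃ i : ℕ, n = (i : ℕ∞) ∧ StratRes N i r s}

/-- Resource bisimilarity is a congruence: `r ≃ s` implies `r + w ≃ s + w`; concretely the
relation `{(r+w, s+w) | r ≃ s}` is a resource bisimulation. -/

theorem resBisim_symm' {N : LPN P T Act} {r s : P → ℕ} (h : ResBisim N r s) :
    ResBisim N s r := by
  obtain ⟨R, ⟨h1, h2⟩, hrs⟩ := h
  exact ⟨fun a b => R b a, ⟨h2, h1⟩, hrs⟩

theorem main_transfer' (N : LPN P T Act) :
    ResTransfer N (fun a b => ∃ r s w : P → ℕ, ResBisim N r s ∧ a = r + w ∧ b = s + w)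
      (fun a b => ∃ r s w : P → ℕ, ResBisim N r s ∧ a = r + w ∧ b = s + w) := by
  rintro a b ⟨r, s, w, hrs, rfl, rfl⟩ t a' ⟨_, ha'⟩
  obtain ⟨R, hR, hrsR⟩ := hrs
  have hfr : Fires N (fun p => r p + (N.pre t p - r p)) t
      (fun p => r p + (N.pre t p - r p) - N.pre t p + N.post t p) :=
    ⟨fun p => by dsimp; omega, rfl⟩
  obtain ⟨u, s', hlab, ⟨hle2, hs'⟩, hRs⟩ := hR.1 r s hrsR t _ hfr
  refine ⟨u, fun p => s' p + (w p + (N.pre t p - (r p + w p)) - (N.pre t p - r p)),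
    hlab, ⟨?_, ?_⟩, ?_⟩
  · intro p
    have h1 := hle2 p
    dsimp at h1 ⊢
    omega
  · funext p
    have h1 := hle2 p
    have h2 := congrFun hs' p
    dsimp at h1 h2 ⊢
    omega
  · refine ⟨_, s', fun p => w p + (N.pre t p - (r p + w p)) - (N.pre t p - r p),
      ⟨R, hR, hRs⟩, ?_, rfl⟩
    funext p
    have h1 := congrFun ha' p
    simp only [Pi.add_apply] at h1 ⊢
    omega

theorem resBisim_congruence (N : LPN P T Act) :
    IsResBisim N (fun a b => ∃ r s w : P → ℕ, ResBisim N r s ∧ a = r + w ∧ b = s + w) ∧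
      ∀ r s w : P → ℕ, ResBisim N r s → ResBisim N (r + w) (s + w) := by
  have hbig : IsResBisim N
      (fun a b => ∃ r s w : P → ℕ, ResBisim N r s ∧ a = r + w ∧ b = s + w) := by
    constructor
    · exact main_transfer' N
    · intro a b hab t r' hf
      obtain ⟨r, s, w, hrs, hb, ha⟩ := hab
      obtain ⟨u, s', hlab, hfs, r₂, s₂, w₂, h2, hx, hy⟩ :=
        main_transfer' N a b ⟨s, r, w, resBisim_symm' hrs, ha, hb⟩ t r' hf
      exact ⟨u, s', hlab, hfs, s₂, r₂, w₂, resBisim_symm' h2, hy, hx⟩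
  exact ⟨hbig, fun r s w h => ⟨_, hbig, r, s, w, h, rfl, rfl⟩⟩
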